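/- Let E be a real normed space, S ⊆ E a convex set, φ : E → ℝ a continuous linear map, b ∈ ℝ, and define the affine function f(x) = φ(x) + b. Let g : E → ℝ be convex on S, differentiable at a point x* ∈ S with Fréchet derivative g'(x*), and suppose g(x) > 0 for all x ∈ S and f(x*) ≥ 0. If the stationarity condition φ = (f(x*)/g(x*))·g'(x*) holds (equality of continuous linear maps, i.e. x* is a stationary point of f/g), then f(x)/g(x) ≤ f(x*)/g(x*) for every x ∈ S; that is, every stationary point of the ratio f/g is a global maximum over S. -/

import Mathlib

/-- Pseudoconcavity part of Theorem 3: for an affine nonnegative numerator `f = φ + b` and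
a convex positive denominator `g`, any stationary point `x*` of the ratio `f/g`
(where `φ = (f x*/g x*) • g'(x*)`) is a global maximum of `f/g` over the convex set `S`. -/
theorem ratio_affine_div_convex_stationary_global_max
    {E : Type*} [NormedAddCommGroup E] [NormedSpace ℝ E]
    {S : Set E} (hS : Convex ℝ S)
    (φ : E →L[ℝ] ℝ) (b : ℝ) (f : E → ℝ) (hf : ∀ x, f x = φ x + b)
    (g : E → ℝ) (hg : ConvexOn ℝ S g) (hg0 : ∀ x ∈ S, 0 < g x)
    (xstar : E) (hxstar : xstar ∈ S) (hfstar : 0 ≤ f xstar)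
    (g' : E →L[ℝ] ℝ) (hg' : HasFDerivAt g g' xstar)
    (hstat : φ = (f xstar / g xstar) • g') :
    ∀ x ∈ S, f x / g x ≤ f xstar / g xstar := by
  intro x hx
  set ρ := f xstar / g xstar with hρ
  have hgs : 0 < g xstar := hg0 _ hxstar
  have hgx : 0 < g x := hg0 _ hx
  have hρ0 : 0 ≤ ρ := div_nonneg hfstar hgs.le
  set v := x - xstar with hv
  have hψ : HasDerivAt (fun t : ℝ => g (xstar + t • v)) (g' v) 0 := by
    have h1 : HasDerivAt (fun t : ℝ => xstar + t • v) v 0 := by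
      simpa using ((hasDerivAt_id (0:ℝ)).smul_const v).const_add xstar
    have hg2 : HasFDerivAt g g' (xstar + (0:ℝ) • v) := by simpa using hg'
    have := hg2.comp_hasDerivAt 0 h1
    exact this
  -- first-order condition: g' (x - xstar) ≤ g x - g xstar
  have key : g' v ≤ g x - g xstar := by
    have hslope : Filter.Tendsto (slope (fun t : ℝ => g (xstar + t • v)) 0)
        (nhdsWithin 0 {(0:ℝ)}ᶜ) (nhds (g' v)) :=
      hasDerivAt_iff_tendsto_slope.mp hψ
    have hslope' : Filter.Tendsto (slope (fun t : ℝ => g (xstar + t • v)) 0)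
        (nhdsWithin 0 (Set.Ioi 0)) (nhds (g' v)) :=
      hslope.mono_left (nhdsWithin_mono _ (fun t ht => ne_of_gt ht))
    refine le_of_tendsto hslope' ?_
    filter_upwards [Ioo_mem_nhdsGT_of_mem (by norm_num : (0:ℝ) ∈ Set.Ico 0 1)] with t ht
    obtain ⟨ht0, ht1⟩ := ht
    have hmem : xstar + t • v = (1 - t) • xstar + t • x := by
      rw [hv]; module
    have hcv := hg.2 hxstar hx (by linarith : (0:ℝ) ≤ 1 - t) ht0.le (by ring)
    rw [← hmem] at hcv
    simp only [smul_eq_mul] at hcv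
    rw [slope_def_field]
    simp only [zero_smul, add_zero, sub_zero]
    rw [div_le_iff₀ ht0]
    nlinarith
  -- algebra
  have hφx : φ x = ρ * g' x := by rw [hstat]; simp
  have hφs : φ xstar = ρ * g' xstar := by rw [hstat]; simp
  have hb : f xstar = ρ * g xstar := by
    rw [hρ, div_mul_cancel₀ _ hgs.ne']
  have hgv : g' v = g' x - g' xstar := by rw [hv]; simp
  have hfle : f x ≤ ρ * g x := by
    have h1 : f x - f xstar = ρ * g' v := by
      rw [hf x, hf xstar, hφx, hφs, hgv]; ring
    nlinarith [mul_le_mul_of_nonneg_left key hρ0]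
  rw [div_le_iff₀ hgx]
  linarith
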